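/- Fix n ≥ 1 and a symmetric matrix C_e ∈ ℝ^{n×n}; for orthogonal M let A(M) := Mᵀ C_e M, D(M) := diag(A(M)), Ω(M) := A(M)D(M) − D(M)A(M), and f(M) := (1/2)‖A(M) − D(M)‖_F². Then for every orthogonal M: (i) ‖Ω(M)‖_F² ≤ 8‖C_e‖₂² f(M); and (ii) if δ > 0 satisfies |A(M)_{ii} − A(M)_{jj}| ≥ δ for all i ≠ j, then ‖Ω(M)‖_F² ≥ 2δ² f(M). -/

import Mathlib

open Matrix

/-- The diagonal matrix whose diagonal agrees with `X`. -/
noncomputable def diagPart {n : ℕ} (X : Matrix (Fin n) (Fin n) ℝ) :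
    Matrix (Fin n) (Fin n) ℝ :=
  Matrix.diagonal (fun i => X i i)

/-- Frobenius norm of a real square matrix. -/
noncomputable def frobNorm {n : ℕ} (X : Matrix (Fin n) (Fin n) ℝ) : ℝ :=
  Real.sqrt (∑ i, ∑ j, (X i j) ^ 2)

/-- Spectral (ℓ²-operator) norm of a real square matrix. -/
noncomputable def specNorm {n : ℕ} (X : Matrix (Fin n) (Fin n) ℝ) : ℝ :=
  ‖LinearMap.toContinuousLinearMap (Matrix.toEuclideanLin X)‖

/-- Rotated covariance `A(M) = Mᵀ C_e M`. -/
noncomputable def rotA {n : ℕ} (Ce M : Matrix (Fin n) (Fin n) ℝ) :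
    Matrix (Fin n) (Fin n) ℝ := Mᵀ * Ce * M

/-- The commutator generator `Ω(M) = A D − D A`. -/
noncomputable def genOmega {n : ℕ} (Ce M : Matrix (Fin n) (Fin n) ℝ) :
    Matrix (Fin n) (Fin n) ℝ :=
  rotA Ce M * diagPart (rotA Ce M) - diagPart (rotA Ce M) * rotA Ce M

/-- The diagonalization objective `f(M) = (1/2)‖off(A(M))‖_F²`. -/
noncomputable def objF {n : ℕ} (Ce M : Matrix (Fin n) (Fin n) ℝ) : ℝ :=
  (1 / 2) * frobNorm (rotA Ce M - diagPart (rotA Ce M)) ^ 2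

lemma frobNorm_sq {n : ℕ} (X : Matrix (Fin n) (Fin n) ℝ) :
    frobNorm X ^ 2 = ∑ i, ∑ j, (X i j) ^ 2 := by
  apply Real.sq_sqrt
  positivity

lemma genOmega_entry {n : ℕ} (Ce M : Matrix (Fin n) (Fin n) ℝ) (i j : Fin n) :
    genOmega Ce M i j = rotA Ce M i j * (rotA Ce M j j - rotA Ce M i i) := by
  simp [genOmega, diagPart, Matrix.sub_apply, Matrix.mul_diagonal,
    Matrix.diagonal_mul]
  ring

lemma off_entry {n : ℕ} (Ce M : Matrix (Fin n) (Fin n) ℝ) (i j : Fin n) :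
    (rotA Ce M - diagPart (rotA Ce M)) i j =
      if i = j then 0 else rotA Ce M i j := by
  by_cases h : i = j
  · subst h; simp [diagPart]
  · simp [diagPart, Matrix.sub_apply, Matrix.diagonal_apply_ne _ h, h]

lemma diag_abs_le {n : ℕ} (Ce M : Matrix (Fin n) (Fin n) ℝ)
    (hM : Mᵀ * M = 1) (i : Fin n) :
    |rotA Ce M i i| ≤ specNorm Ce := by
  set x : EuclideanSpace ℝ (Fin n) := (WithLp.equiv 2 _).symm (fun k => M k i) with hx
  have hnx : ‖x‖ = 1 := by
    have h1 : (Mᵀ * M) i i = (1 : Matrix (Fin n) (Fin n) ℝ) i i := by rw [hM]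
    have : ∑ k, M k i * M k i = 1 := by
      simpa [Matrix.mul_apply, Matrix.transpose_apply, Matrix.one_apply] using h1
    rw [EuclideanSpace.norm_eq]
    simp only [hx, WithLp.equiv_symm_apply, PiLp.toLp_apply, Real.norm_eq_abs, sq_abs]
    have h2 : ∑ k, M k i ^ 2 = 1 := by simpa [sq] using this
    rw [h2, Real.sqrt_one]
  have hinner : (inner ℝ x (Matrix.toEuclideanLin Ce x) : ℝ) = rotA Ce M i i := by
    rw [hx, WithLp.equiv_symm_apply, Matrix.toEuclideanLin_apply_piLp_toLp]
    rw [PiLp.inner_apply]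
    simp only [PiLp.toLp_apply, RCLike.inner_apply, starRingEnd_apply, star_trivial]
    rw [rotA]
    simp only [Matrix.mul_apply, Matrix.transpose_apply, Matrix.mulVec, dotProduct]
    simp only [Finset.mul_sum, Finset.sum_mul]
    rw [Finset.sum_comm]
    exact Finset.sum_congr rfl fun k _ => Finset.sum_congr rfl fun l _ => by ring
  have hb : |(inner ℝ x (Matrix.toEuclideanLin Ce x) : ℝ)| ≤ specNorm Ce := by
    have h := (LinearMap.toContinuousLinearMap (Matrix.toEuclideanLin Ce)).le_opNorm x
    simp only [LinearMap.coe_toContinuousLinearMap'] at h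
    calc |(inner ℝ x (Matrix.toEuclideanLin Ce x) : ℝ)|
        ≤ ‖x‖ * ‖Matrix.toEuclideanLin Ce x‖ := abs_real_inner_le_norm _ _
      _ ≤ ‖x‖ * (specNorm Ce * ‖x‖) :=
          mul_le_mul_of_nonneg_left h (norm_nonneg _)
      _ = specNorm Ce := by rw [hnx]; ring
  rwa [hinner] at hb

/-- **Spectral sandwiching**: `2δ² f(M) ≤ ‖Ω(M)‖_F² ≤ 8‖C_e‖₂² f(M)` on the
spectrally separated domain. -/
theorem spectral_sandwich {n : ℕ} (hn : 1 ≤ n)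
    (Ce M : Matrix (Fin n) (Fin n) ℝ) (hCe : Ceᵀ = Ce) (hM : Mᵀ * M = 1) :
    frobNorm (genOmega Ce M) ^ 2 ≤ 8 * specNorm Ce ^ 2 * objF Ce M ∧
    (∀ δ : ℝ, 0 < δ →
      (∀ i j : Fin n, i ≠ j → δ ≤ |rotA Ce M i i - rotA Ce M j j|) →
      2 * δ ^ 2 * objF Ce M ≤ frobNorm (genOmega Ce M) ^ 2) := by
  set A := rotA Ce M with hA
  have hΩ : frobNorm (genOmega Ce M) ^ 2
      = ∑ i, ∑ j, (A i j * (A j j - A i i)) ^ 2 := by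
    rw [frobNorm_sq]
    exact Finset.sum_congr rfl fun i _ => Finset.sum_congr rfl fun j _ => by
      rw [genOmega_entry]
  have hobj : objF Ce M = (1 / 2) * ∑ i, ∑ j,
      (if i = j then (0:ℝ) else A i j) ^ 2 := by
    rw [objF, frobNorm_sq]
    congr 1
    exact Finset.sum_congr rfl fun i _ => Finset.sum_congr rfl fun j _ => by
      rw [off_entry]
  constructor
  · -- upper bound
    rw [hΩ]
    have : ∀ i j : Fin n, (A i j * (A j j - A i i)) ^ 2
        ≤ 4 * specNorm Ce ^ 2 * (if i = j then (0:ℝ) else A i j) ^ 2 := by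
      intro i j
      by_cases h : i = j
      · subst h; simp
      · simp only [h, if_neg, if_false]
        rw [mul_pow]
        rw [mul_comm (4 * specNorm Ce ^ 2) _]
        apply mul_le_mul_of_nonneg_left _ (sq_nonneg _)
        have h1 := diag_abs_le Ce M hM i
        have h2 := diag_abs_le Ce M hM j
        have habs : |A j j - A i i| ≤ 2 * specNorm Ce := by
          calc |A j j - A i i| ≤ |A j j| + |A i i| := abs_sub _ _
            _ ≤ 2 * specNorm Ce := by rw [hA] at *; linarith
        calc (A j j - A i i) ^ 2 = |A j j - A i i| ^ 2 := (sq_abs _).symm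
          _ ≤ (2 * specNorm Ce) ^ 2 := by
              apply pow_le_pow_left₀ (abs_nonneg _) habs
          _ = 4 * specNorm Ce ^ 2 := by ring
    calc ∑ i, ∑ j, (A i j * (A j j - A i i)) ^ 2
        ≤ ∑ i, ∑ j, 4 * specNorm Ce ^ 2 * (if i = j then (0:ℝ) else A i j) ^ 2 :=
          Finset.sum_le_sum fun i _ => Finset.sum_le_sum fun j _ => this i j
      _ = 8 * specNorm Ce ^ 2 * objF Ce M := by
          rw [hobj]
          simp only [← Finset.mul_sum]
          ring
  · intro δ hδ hsep
    rw [hΩ, hobj]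
    have : ∀ i j : Fin n, δ ^ 2 * (if i = j then (0:ℝ) else A i j) ^ 2
        ≤ (A i j * (A j j - A i i)) ^ 2 := by
      intro i j
      by_cases h : i = j
      · subst h; simp
      · simp only [h, if_neg, if_false]
        rw [mul_pow, mul_comm (δ ^ 2) _]
        apply mul_le_mul_of_nonneg_left _ (sq_nonneg _)
        have hs := hsep i j h
        calc δ ^ 2 ≤ |A i i - A j j| ^ 2 := pow_le_pow_left₀ hδ.le hs 2
          _ = (A j j - A i i) ^ 2 := by rw [sq_abs, ← neg_sub, neg_pow]; ring_nf
    calc 2 * δ ^ 2 * ((1 / 2) * ∑ i, ∑ j, (if i = j then (0:ℝ) else A i j) ^ 2)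
        = ∑ i, ∑ j, δ ^ 2 * (if i = j then (0:ℝ) else A i j) ^ 2 := by
          simp only [← Finset.mul_sum]
          ring
      _ ≤ ∑ i, ∑ j, (A i j * (A j j - A i i)) ^ 2 :=
          Finset.sum_le_sum fun i _ => Finset.sum_le_sum fun j _ => this i j
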